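/- (Log-linear property of the error for SO(3).) Let ω : ℝ → ℝ³ and let R : ℝ → Matrix (Fin 3) (Fin 3) ℝ be differentiable with d/dt R t = (R t) * (ω t)^∧ for all t, and assume (R t)ᵀ (R t) = I and det (R t) = 1 for all t. Fix ξ₀ ∈ ℝ³ and define ξ t := (R t)ᵀ ξ₀ and E t := exp_m((ξ t)^∧). Then for all t: (i) d/dt ξ t = −(ω t)^∧ (ξ t), i.e., ξ solves a linear time-varying differential equation; (ii) E t = (R t)ᵀ * exp_m(ξ₀^∧) * (R t); and (iii) d/dt E t = (E t) * (ω t)^∧ − (ω t)^∧ * (E t), so the nonlinear left-invariant error with initial value exp_m(ξ₀^∧) is exactly recovered as the exponential of the solution of the linear equation. -/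

import Mathlib

open Matrix

/-- The skew-symmetric (hat) matrix of a vector `φ ∈ ℝ³`, so that `skew φ *ᵥ x = φ × x`. -/
noncomputable def skew (φ : Fin 3 → ℝ) : Matrix (Fin 3) (Fin 3) ℝ :=
  !![0, -φ 2, φ 1; φ 2, 0, -φ 0; -φ 1, φ 0, 0]

lemma skew_transpose (φ : Fin 3 → ℝ) : (skew φ)ᵀ = -skew φ := by
  ext i j; fin_cases i <;> fin_cases j <;> simp [skew]

lemma skew_conj (A : Matrix (Fin 3) (Fin 3) ℝ) (hA : Aᵀ * A = 1) (hdet : A.det = 1)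
    (v : Fin 3 → ℝ) : skew (Aᵀ *ᵥ v) = Aᵀ * skew v * A := by
  have hadj : adjugate A = Aᵀ := by
    have h1 : A * adjugate A = 1 := by rw [Matrix.mul_adjugate, hdet, one_smul]
    calc adjugate A = (Aᵀ * A) * adjugate A := by rw [hA, one_mul]
      _ = Aᵀ * (A * adjugate A) := by rw [Matrix.mul_assoc]
      _ = Aᵀ := by rw [h1, mul_one]
  rw [adjugate_fin_three] at hadj
  have h := fun i j => congrFun (congrFun hadj i) j
  have h00 := h 0 0; have h01 := h 0 1; have h02 := h 0 2
  have h10 := h 1 0; have h11 := h 1 1; have h12 := h 1 2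
  have h20 := h 2 0; have h21 := h 2 1; have h22 := h 2 2
  simp [Matrix.transpose_apply] at h00 h01 h02 h10 h11 h12 h20 h21 h22
  clear h hadj hA hdet
  ext i j
  fin_cases i <;> fin_cases j <;>
    simp [skew, Matrix.mul_apply, Matrix.mulVec, dotProduct, Fin.sum_univ_three]
  · ring
  · linear_combination v 0 * h20 + v 1 * h21 + v 2 * h22
  · linear_combination -v 0 * h10 - v 1 * h11 - v 2 * h12
  · linear_combination -v 0 * h20 - v 1 * h21 - v 2 * h22
  · ring
  · linear_combination v 0 * h00 + v 1 * h01 + v 2 * h02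
  · linear_combination v 0 * h10 + v 1 * h11 + v 2 * h12
  · linear_combination -v 0 * h00 - v 1 * h01 - v 2 * h02
  · ring

lemma entry_deriv_mul {A B : ℝ → Matrix (Fin 3) (Fin 3) ℝ}
    {A' B' : Matrix (Fin 3) (Fin 3) ℝ} {t : ℝ}
    (hA : ∀ i j, HasDerivAt (fun s => A s i j) (A' i j) t)
    (hB : ∀ i j, HasDerivAt (fun s => B s i j) (B' i j) t) (i j : Fin 3) :
    HasDerivAt (fun s => (A s * B s) i j) ((A' * B t + A t * B') i j) t := by
  have h := HasDerivAt.fun_sum (fun k (_ : k ∈ Finset.univ) => (hA i k).mul (hB k j))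
  simp only [Matrix.mul_apply, Matrix.add_apply]
  rw [← Finset.sum_add_distrib]
  exact h

/-- **Log-linear property of the error for SO(3).**
If `Ṙ = R ω̂` with `R t ∈ SO(3)`, and `ξ t := (R t)ᵀ ξ₀`, `E t := exp_m((ξ t)^∧)`, then:
(i) `ξ` solves the linear time-varying ODE `d/dt ξ t = -(ω t)^∧ ξ t`;
(ii) `E t = (R t)ᵀ * exp_m(ξ₀^∧) * (R t)`;
(iii) `E` solves the nonlinear left-invariant error equation
`d/dt E t = E t * (ω t)^∧ - (ω t)^∧ * E t`. -/
theorem so3_log_linear_error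
    (ω : ℝ → Fin 3 → ℝ) (R : ℝ → Matrix (Fin 3) (Fin 3) ℝ)
    (hR : ∀ (t : ℝ) (i j : Fin 3), HasDerivAt (fun s => R s i j) ((R t * skew (ω t)) i j) t)
    (hSO : ∀ t : ℝ, (R t)ᵀ * R t = 1 ∧ (R t).det = 1)
    (ξ₀ : Fin 3 → ℝ)
    (ξ : ℝ → Fin 3 → ℝ) (hξ : ξ = fun t => (R t)ᵀ *ᵥ ξ₀)
    (E : ℝ → Matrix (Fin 3) (Fin 3) ℝ) (hE : E = fun t => NormedSpace.exp (skew (ξ t))) :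
    (∀ (t : ℝ) (i : Fin 3),
        HasDerivAt (fun s => ξ s i) ((-(skew (ω t)) *ᵥ ξ t) i) t) ∧
    (∀ t : ℝ, E t = (R t)ᵀ * NormedSpace.exp (skew ξ₀) * R t) ∧
    (∀ (t : ℝ) (i j : Fin 3),
        HasDerivAt (fun s => E s i j)
          ((E t * skew (ω t) - skew (ω t) * E t) i j) t) := by
  have hOrth := fun t => (hSO t).1
  have hdet := fun t => (hSO t).2
  have hconj : ∀ t, skew (ξ t) = (R t)ᵀ * skew ξ₀ * R t := by
    intro t; rw [hξ]; exact skew_conj (R t) (hOrth t) (hdet t) ξ₀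
  -- part (ii)
  have part2 : ∀ t : ℝ, E t = (R t)ᵀ * NormedSpace.exp (skew ξ₀) * R t := by
    intro t
    have hinv : (R t)⁻¹ = (R t)ᵀ := Matrix.inv_eq_left_inv (hOrth t)
    have hu : IsUnit (R t) := (Matrix.isUnit_iff_isUnit_det _).mpr (Matrix.isUnit_det_of_left_inverse (hOrth t))
    rw [hE]
    simp only
    rw [hconj t, ← hinv, Matrix.exp_conj' _ _ hu]
  refine ⟨?_, part2, ?_⟩
  -- part (i)
  · intro t i
    have feq : (fun s => ξ s i) = fun s => ∑ j, R s j i * ξ₀ j := by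
      funext s
      rw [hξ]
      simp [Matrix.mulVec, dotProduct, Matrix.transpose_apply]
    rw [feq]
    have hd : HasDerivAt (fun s => ∑ j, R s j i * ξ₀ j)
        (∑ j, (R t * skew (ω t)) j i * ξ₀ j) t :=
      HasDerivAt.fun_sum (fun j _ => (hR t j i).mul_const (ξ₀ j))
    convert hd using 1
    rw [hξ]
    simp only [Matrix.mulVec_mulVec]
    have : -skew (ω t) * (R t)ᵀ = (R t * skew (ω t))ᵀ := by
      rw [Matrix.transpose_mul, skew_transpose, Matrix.neg_mul]
    rw [show (-(skew (ω t))) = -skew (ω t) from rfl, this]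
    simp [Matrix.mulVec, dotProduct, Matrix.transpose_apply]
  -- part (iii)
  · intro t i j
    set C := NormedSpace.exp (skew ξ₀) with hC
    set W := skew (ω t) with hW
    have feq : (fun s => E s i j) = fun s => ((R s)ᵀ * C * R s) i j := by
      funext s; rw [part2 s]
    rw [feq]
    have hT : ∀ i j, HasDerivAt (fun s => (R s)ᵀ i j) (((R t * W)ᵀ) i j) t := by
      intro i j
      simpa [Matrix.transpose_apply] using hR t j i
    have hTC : ∀ i j, HasDerivAt (fun s => ((R s)ᵀ * C) i j) (((R t * W)ᵀ * C) i j) t := by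
      intro i j
      have h := entry_deriv_mul (A := fun s => (R s)ᵀ) (B := fun _ => C)
        (A' := (R t * W)ᵀ) (B' := 0) hT (fun i j => hasDerivAt_const t (C i j)) i j
      simpa using h
    have hfull := entry_deriv_mul (A := fun s => (R s)ᵀ * C) (B := R)
      (A' := (R t * W)ᵀ * C) (B' := R t * W) hTC (hR t) i j
    have hmat : E t * W - W * E t = (R t * W)ᵀ * C * R t + (R t)ᵀ * C * (R t * W) := by
      rw [part2 t, Matrix.transpose_mul, skew_transpose]
      noncomm_ring
    rw [hmat]
    exact hfull
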